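/- Let f₁,…,f_s : D(f_ℓ) ⊆ H → H be maximal dissipative operators on a Hilbert space H. Then for every h > 0 the Lie-splitting operator P_h = (I − h f_s)⁻¹ ⋯ (I − h f₁)⁻¹ : H → H is nonexpansive, and for every u ∈ ⋂_ℓ D(f_ℓ) one has lim_{h→0} (1/h)(P_h − I)u = Σ_{ℓ=1}^s f_ℓ u in H. -/

import Mathlib

set_option linter.unusedSectionVars false
set_option linter.unusedVariables false
set_option linter.deprecated false


open Filter Topology

noncomputable section

section Single

variable {H : Type*} [NormedAddCommGroup H] [InnerProductSpace ℝ H] [CompleteSpace H]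

theorem resolvent_nonexpansive (D : Set H) (f : H → H)
    (hd : ∀ u ∈ D, ∀ v ∈ D, (inner ℝ (f u - f v) (u - v) : ℝ) ≤ 0)
    (J : ℝ → H → H)
    (hJm : ∀ h : ℝ, 0 < h → ∀ w, J h w ∈ D)
    (hJe : ∀ h : ℝ, 0 < h → ∀ w, J h w - h • f (J h w) = w)
    {h : ℝ} (hh : 0 < h) (w w' : H) :
    ‖J h w - J h w'‖ ≤ ‖w - w'‖ := by
  set a := J h w with ha
  set b := J h w' with hb
  have hab : a - b = (w - w') + h • (f a - f b) := by
    have e1 := hJe h hh w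
    have e2 := hJe h hh w'
    rw [← e1, ← e2, smul_sub]
    abel
  have hdis := hd a (hJm h hh w) b (hJm h hh w')
  have h1 : (inner ℝ (a - b) (a - b) : ℝ)
      = inner ℝ (a - b) (w - w') + h * inner ℝ (f a - f b) (a - b) := by
    nth_rewrite 2 [hab]
    rw [inner_add_right, real_inner_smul_right, real_inner_comm (a - b) (f a - f b)]
  have h2 : (‖a - b‖ : ℝ)^2 ≤ inner ℝ (a - b) (w - w') := by
    rw [← real_inner_self_eq_norm_sq]
    nlinarith [hdis]
  have h3 := real_inner_le_norm (a - b) (w - w')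
  nlinarith [norm_nonneg (a - b), norm_nonneg (w - w')]

/-- `J h u - u = h • f (J h u)`. -/
theorem resolvent_diff (f : H → H) (J : ℝ → H → H)
    (hJe : ∀ h : ℝ, 0 < h → ∀ w, J h w - h • f (J h w) = w)
    {h : ℝ} (hh : 0 < h) (w : H) :
    J h w - w = h • f (J h w) := by
  have e := hJe h hh w
  calc J h w - w = J h w - (J h w - h • f (J h w)) := by rw [e]
    _ = h • f (J h w) := by abel

theorem norm_f_resolvent_le (D : Set H) (f : H → H)
    (hd : ∀ u ∈ D, ∀ v ∈ D, (inner ℝ (f u - f v) (u - v) : ℝ) ≤ 0)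
    (J : ℝ → H → H)
    (hJm : ∀ h : ℝ, 0 < h → ∀ w, J h w ∈ D)
    (hJe : ∀ h : ℝ, 0 < h → ∀ w, J h w - h • f (J h w) = w)
    {h : ℝ} (hh : 0 < h) {u : H} (hu : u ∈ D) :
    ‖f (J h u)‖ ≤ ‖f u‖ := by
  have hdis := hd (J h u) (hJm h hh u) u hu
  rw [resolvent_diff f J hJe hh u, real_inner_smul_right] at hdis
  have h1 : (inner ℝ (f (J h u) - f u) (f (J h u)) : ℝ) ≤ 0 := by nlinarith [hdis]
  rw [inner_sub_left] at h1
  have h2 := real_inner_le_norm (f u) (f (J h u))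
  have h3 : (inner ℝ (f (J h u)) (f (J h u)) : ℝ) = ‖f (J h u)‖^2 := real_inner_self_eq_norm_sq _
  nlinarith [norm_nonneg (f (J h u)), norm_nonneg (f u)]

end Single

section Single2

variable {H : Type*} [NormedAddCommGroup H] [InnerProductSpace ℝ H] [CompleteSpace H]
variable (D : Set H) (f : H → H)
    (hd : ∀ u ∈ D, ∀ v ∈ D, (inner ℝ (f u - f v) (u - v) : ℝ) ≤ 0)
    (J : ℝ → H → H)
    (hJm : ∀ h : ℝ, 0 < h → ∀ w, J h w ∈ D)
    (hJe : ∀ h : ℝ, 0 < h → ∀ w, J h w - h • f (J h w) = w)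

include hd hJm hJe

theorem resolvent_key {lam mu : ℝ} (hl : 0 < lam) (hm : 0 < mu) (w : H) :
    lam * ‖f (J lam w)‖^2 + mu * ‖f (J mu w)‖^2
      ≤ (lam + mu) * inner ℝ (f (J lam w)) (f (J mu w)) := by
  set a := J lam w with ha'
  set b := J mu w with hb'
  have hdis := hd a (hJm lam hl w) b (hJm mu hm w)
  have hab : a - b = lam • f a - mu • f b := by
    have e1 := resolvent_diff f J hJe hl w
    have e2 := resolvent_diff f J hJe hm w
    simp only [← ha', ← hb'] at e1 e2
    calc a - b = (a - w) - (b - w) := by abel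
      _ = lam • f a - mu • f b := by rw [e1, e2]
  rw [hab, inner_sub_left, inner_sub_right, inner_sub_right, real_inner_smul_right,
    real_inner_smul_right, real_inner_smul_right, real_inner_smul_right] at hdis
  have hA : (inner ℝ (f a) (f a) : ℝ) = ‖f a‖^2 := real_inner_self_eq_norm_sq _
  have hB : (inner ℝ (f b) (f b) : ℝ) = ‖f b‖^2 := real_inner_self_eq_norm_sq _
  have hC : (inner ℝ (f b) (f a) : ℝ) = inner ℝ (f a) (f b) := real_inner_comm _ _
  rw [hA, hB, hC] at hdis
  linarith

theorem resolvent_norm_antitone {lam mu : ℝ} (hl : 0 < lam) (hlm : lam ≤ mu) (w : H) :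
    ‖f (J mu w)‖ ≤ ‖f (J lam w)‖ := by
  have hm : 0 < mu := lt_of_lt_of_le hl hlm
  have key := resolvent_key D f hd J hJm hJe hl hm w
  have hcs := real_inner_le_norm (f (J lam w)) (f (J mu w))
  by_contra h'
  push_neg at h'
  have ht0 : (0:ℝ) ≤ ‖f (J lam w)‖ := norm_nonneg _
  have hs0 : (0:ℝ) < ‖f (J mu w)‖ := lt_of_le_of_lt ht0 h'
  have k2 : (0:ℝ) < mu * ‖f (J mu w)‖ - lam * ‖f (J lam w)‖ := by nlinarith
  nlinarith [mul_pos (sub_pos.2 h') k2]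

theorem resolvent_cauchy_est {lam mu : ℝ} (hl : 0 < lam) (hlm : lam ≤ mu) (w : H) :
    ‖f (J lam w) - f (J mu w)‖^2 ≤ ‖f (J lam w)‖^2 - ‖f (J mu w)‖^2 := by
  have hm : 0 < mu := lt_of_lt_of_le hl hlm
  have key := resolvent_key D f hd J hJm hJe hl hm w
  have hmono := resolvent_norm_antitone D f hd J hJm hJe hl hlm w
  have hns : ‖f (J lam w) - f (J mu w)‖^2
      = ‖f (J lam w)‖^2 - 2 * inner ℝ (f (J lam w)) (f (J mu w)) + ‖f (J mu w)‖^2 :=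
    norm_sub_sq_real _ _
  set t := ‖f (J lam w)‖
  set s := ‖f (J mu w)‖
  have hts : s ^ 2 ≤ t ^ 2 := by
    have := norm_nonneg (f (J mu w))
    nlinarith
  have h1 : (lam + mu) * ‖f (J lam w) - f (J mu w)‖^2 ≤ (mu - lam) * (t^2 - s^2) := by
    rw [hns]; nlinarith
  have h2 : (mu - lam) * (t^2 - s^2) ≤ (lam + mu) * (t^2 - s^2) := by
    apply mul_le_mul_of_nonneg_right (by linarith) (by linarith)
  have hpos : (0:ℝ) < lam + mu := by linarith
  have := le_of_mul_le_mul_left (h1.trans h2) hpos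
  linarith

end Single2

section Single3

variable {H : Type*} [NormedAddCommGroup H] [InnerProductSpace ℝ H] [CompleteSpace H]
variable (D : Set H) (f : H → H)
    (hd : ∀ u ∈ D, ∀ v ∈ D, (inner ℝ (f u - f v) (u - v) : ℝ) ≤ 0)
    (hmx : ∀ h : ℝ, 0 < h → ∀ w : H, ∃ u ∈ D, u - h • f u = w)
    (J : ℝ → H → H)
    (hJm : ∀ h : ℝ, 0 < h → ∀ w, J h w ∈ D)
    (hJe : ∀ h : ℝ, 0 < h → ∀ w, J h w - h • f (J h w) = w)

include hd hmx hJm hJe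

theorem resolvent_consistency {u : H} (hu : u ∈ D) :
    Tendsto (fun h : ℝ => f (J h u)) (nhdsWithin 0 (Set.Ioi 0)) (nhds (f u)) := by
  have hbd : ∀ h : ℝ, 0 < h → ‖f (J h u)‖ ≤ ‖f u‖ := fun h hh =>
    norm_f_resolvent_le D f hd J hJm hJe hh hu
  set g : ℝ → ℝ := fun h => ‖f (J h u)‖^2 with hg
  set G : Set ℝ := g '' Set.Ioi 0 with hG
  have hGne : G.Nonempty := ⟨g 1, 1, Set.mem_Ioi.2 one_pos, rfl⟩
  have hGbdd : BddAbove G := by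
    refine ⟨‖f u‖^2, ?_⟩
    rintro x ⟨h, hh, rfl⟩
    have h1 := hbd h hh
    have h0 := norm_nonneg (f (J h u))
    simp only [hg]
    nlinarith
  set L := sSup G with hL
  have hcauchy : Cauchy (Filter.map (fun h : ℝ => f (J h u)) (nhdsWithin 0 (Set.Ioi 0))) := by
    rw [Metric.cauchy_iff]
    constructor
    · exact Filter.map_neBot
    · intro ε hε
      have hε2 : 0 < ε^2/2 := by positivity
      obtain ⟨x, ⟨δ, hδ, rfl⟩, hx⟩ := exists_lt_of_lt_csSup hGne (sub_lt_self L hε2)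
      rw [Set.mem_Ioi] at hδ
      refine ⟨(fun h : ℝ => f (J h u)) '' Set.Ioo 0 δ,
        Filter.image_mem_map (Ioo_mem_nhdsGT_of_mem ⟨le_refl 0, hδ⟩), ?_⟩
      have key : ∀ l m : ℝ, 0 < l → l ≤ m → m < δ →
          dist (f (J l u)) (f (J m u)) < ε := by
        intro l m hl hlm hmδ
        have hmpos : 0 < m := lt_of_lt_of_le hl hlm
        have est := resolvent_cauchy_est D f hd J hJm hJe hl hlm u
        have h1 : g l ≤ L := le_csSup hGbdd ⟨l, hl, rfl⟩
        have h2 : g δ ≤ g m := by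
          have hmono := resolvent_norm_antitone D f hd J hJm hJe hmpos hmδ.le u
          have h0 := norm_nonneg (f (J δ u))
          simp only [hg]
          nlinarith
        have hlt : dist (f (J l u)) (f (J m u))^2 < ε^2 := by
          rw [dist_eq_norm]
          calc ‖f (J l u) - f (J m u)‖^2 ≤ g l - g m := est
            _ < ε^2 := by linarith
        exact lt_of_pow_lt_pow_left₀ 2 hε.le hlt
      rintro x ⟨lam, ⟨hl0, hlδ⟩, rfl⟩ y ⟨mu, ⟨hm0, hmδ⟩, rfl⟩
      rcases le_total lam mu with hc | hc
      · exact key lam mu hl0 hc hmδ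
      · rw [dist_comm]; exact key mu lam hm0 hc hlδ
  obtain ⟨y, hy⟩ := CompleteSpace.complete hcauchy
  have hy' : Tendsto (fun h : ℝ => f (J h u)) (nhdsWithin 0 (Set.Ioi 0)) (nhds y) := hy
  have hJu : Tendsto (fun h : ℝ => J h u) (nhdsWithin 0 (Set.Ioi 0)) (nhds u) := by
    rw [tendsto_iff_norm_sub_tendsto_zero]
    have hb : ∀ᶠ h in nhdsWithin (0:ℝ) (Set.Ioi 0), ‖J h u - u‖ ≤ h * ‖f u‖ := by
      filter_upwards [self_mem_nhdsWithin] with h hh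
      rw [Set.mem_Ioi] at hh
      rw [resolvent_diff f J hJe hh u, norm_smul, Real.norm_eq_abs, abs_of_pos hh]
      exact mul_le_mul_of_nonneg_left (hbd h hh) hh.le
    apply squeeze_zero' (Filter.Eventually.of_forall fun h => norm_nonneg _) hb
    have hmc : Tendsto (fun h : ℝ => h * ‖f u‖) (nhds 0) (nhds 0) := by
      simpa using (tendsto_id.mul_const ‖f u‖ : Tendsto (fun h : ℝ => h * ‖f u‖) (nhds 0) (nhds (0 * ‖f u‖)))
    exact hmc.mono_left nhdsWithin_le_nhds
  obtain ⟨v, hvD, hveq⟩ := hmx 1 one_pos (u - y)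
  have hveq' : v - f v = u - y := by simpa using hveq
  have hlim : Tendsto (fun h : ℝ => (inner ℝ (f v - f (J h u)) (v - J h u) : ℝ))
      (nhdsWithin 0 (Set.Ioi 0)) (nhds (inner ℝ (f v - y) (v - u))) :=
    (tendsto_const_nhds.sub hy').inner (tendsto_const_nhds.sub hJu)
  have hle : (inner ℝ (f v - y) (v - u) : ℝ) ≤ 0 := by
    apply le_of_tendsto hlim
    filter_upwards [self_mem_nhdsWithin] with h hh
    rw [Set.mem_Ioi] at hh
    exact hd v hvD (J h u) (hJm h hh u)
  have hvu : v - u = f v - y := by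
    calc v - u = (v - f v) - u + f v := by abel
      _ = (u - y) - u + f v := by rw [hveq']
      _ = f v - y := by abel
  rw [hvu] at hle
  have hz : f v - y = 0 := by
    have h0 : (0:ℝ) ≤ inner ℝ (f v - y) (f v - y) := real_inner_self_nonneg
    exact inner_self_eq_zero.1 (le_antisymm hle h0)
  have hfvy : f v = y := by rwa [sub_eq_zero] at hz
  have hvu0 : v = u := by
    rw [hfvy] at hvu
    have : v - u = 0 := by rw [hvu]; abel
    rwa [sub_eq_zero] at this
  have hyfu : y = f u := by rw [← hvu0, hfvy]
  rwa [← hyfu]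

end Single3

section Single4

variable {H : Type*} [NormedAddCommGroup H] [InnerProductSpace ℝ H] [CompleteSpace H]
variable (D : Set H) (f : H → H)
    (hd : ∀ u ∈ D, ∀ v ∈ D, (inner ℝ (f u - f v) (u - v) : ℝ) ≤ 0)
    (hmx : ∀ h : ℝ, 0 < h → ∀ w : H, ∃ u ∈ D, u - h • f u = w)
    (J : ℝ → H → H)
    (hJm : ∀ h : ℝ, 0 < h → ∀ w, J h w ∈ D)
    (hJe : ∀ h : ℝ, 0 < h → ∀ w, J h w - h • f (J h w) = w)

include hd hmx hJm hJe

/-- Shifted consistency: if `(w h - u)/h → z` then `(J h (w h) - u)/h → z + f u`. -/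
theorem resolvent_consistency_shifted {u : H} (hu : u ∈ D) (z : H) (w : ℝ → H)
    (hw : Tendsto (fun h : ℝ => h⁻¹ • (w h - u)) (nhdsWithin 0 (Set.Ioi 0)) (nhds z)) :
    Tendsto (fun h : ℝ => h⁻¹ • (J h (w h) - u)) (nhdsWithin 0 (Set.Ioi 0))
      (nhds (z + f u)) := by
  -- shifted operator
  set f' : H → H := fun x => f x + z with hf'
  set J' : ℝ → H → H := fun h v => J h (v + h • z) with hJ'
  have hd' : ∀ a ∈ D, ∀ b ∈ D, (inner ℝ (f' a - f' b) (a - b) : ℝ) ≤ 0 := by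
    intro a ha b hb
    have : f' a - f' b = f a - f b := by simp [hf']
    rw [this]
    exact hd a ha b hb
  have hmx' : ∀ h : ℝ, 0 < h → ∀ v : H, ∃ x ∈ D, x - h • f' x = v := by
    intro h hh v
    obtain ⟨x, hx, he⟩ := hmx h hh (v + h • z)
    refine ⟨x, hx, ?_⟩
    rw [hf']
    simp only [smul_add]
    rw [sub_add_eq_sub_sub, he]
    abel
  have hJm' : ∀ h : ℝ, 0 < h → ∀ v, J' h v ∈ D := fun h hh v => hJm h hh _
  have hJe' : ∀ h : ℝ, 0 < h → ∀ v, J' h v - h • f' (J' h v) = v := by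
    intro h hh v
    have he := hJe h hh (v + h • z)
    simp only [hJ', hf', smul_add]
    rw [sub_add_eq_sub_sub, he]
    abel
  have hcons := resolvent_consistency D f' hd' hmx' J' hJm' hJe' hu
  -- `f' (J' h u) = h⁻¹ • (J h (u + h • z) - u)` and it tends to `f u + z`
  have hmain : Tendsto (fun h : ℝ => f' (J' h u)) (nhdsWithin 0 (Set.Ioi 0))
      (nhds (f u + z)) := hcons
  -- second piece tends to 0
  have hbnd : ∀ᶠ h in nhdsWithin (0:ℝ) (Set.Ioi 0),
      ‖h⁻¹ • (J h (w h) - J h (u + h • z))‖ ≤ ‖h⁻¹ • (w h - u) - z‖ := by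
    filter_upwards [self_mem_nhdsWithin] with h hh
    rw [Set.mem_Ioi] at hh
    have hne := resolvent_nonexpansive D f hd J hJm hJe hh (w h) (u + h • z)
    calc ‖h⁻¹ • (J h (w h) - J h (u + h • z))‖
        = h⁻¹ * ‖J h (w h) - J h (u + h • z)‖ := by
          rw [norm_smul, Real.norm_eq_abs, abs_of_pos (inv_pos.2 hh)]
      _ ≤ h⁻¹ * ‖w h - (u + h • z)‖ :=
          mul_le_mul_of_nonneg_left hne (inv_pos.2 hh).le
      _ = ‖h⁻¹ • (w h - u) - z‖ := by
          rw [show h⁻¹ • (w h - u) - z = h⁻¹ • (w h - (u + h • z)) by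
            rw [smul_sub, smul_sub, smul_add, smul_smul, inv_mul_cancel₀ (ne_of_gt hh), one_smul]
            abel]
          rw [norm_smul, Real.norm_eq_abs, abs_of_pos (inv_pos.2 hh)]
  have hB : Tendsto (fun h : ℝ => h⁻¹ • (J h (w h) - J h (u + h • z)))
      (nhdsWithin 0 (Set.Ioi 0)) (nhds 0) :=
    squeeze_zero_norm' hbnd ((tendsto_iff_norm_sub_tendsto_zero).1 hw)
  have hsum : Tendsto (fun h : ℝ => f' (J' h u) + h⁻¹ • (J h (w h) - J h (u + h • z)))
      (nhdsWithin 0 (Set.Ioi 0)) (nhds (z + f u)) := by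
    have := hmain.add hB
    rw [add_zero] at this
    rwa [add_comm (f u) z] at this
  apply hsum.congr'
  filter_upwards [self_mem_nhdsWithin] with h hh
  rw [Set.mem_Ioi] at hh
  have hid : J' h u - u = h • f' (J' h u) := by
    have := hJe' h hh u
    calc J' h u - u = J' h u - (J' h u - h • f' (J' h u)) := by rw [this]
      _ = h • f' (J' h u) := by abel
  have hfp : f' (J' h u) = h⁻¹ • (J h (u + h • z) - u) := by
    rw [show J h (u + h • z) = J' h u from rfl, hid, smul_smul,
      inv_mul_cancel₀ (ne_of_gt hh), one_smul]
  rw [hfp, ← smul_add]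
  congr 1
  abel

end Single4

section Lists

variable {H : Type*} [NormedAddCommGroup H] [InnerProductSpace ℝ H] [CompleteSpace H]
variable {s : ℕ}

/-- Left-to-right composition of the resolvents indexed by a list. -/
def lieQ (J : Fin s → ℝ → H → H) (L : List (Fin s)) (h : ℝ) : H → H :=
  (L.map fun ℓ => J ℓ h).foldl (fun acc Φ => Φ ∘ acc) id

theorem lieQ_concat (J : Fin s → ℝ → H → H) (L : List (Fin s)) (ℓ : Fin s) (h : ℝ) :
    lieQ J (L ++ [ℓ]) h = J ℓ h ∘ lieQ J L h := by
  simp [lieQ]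

theorem lieQ_props (D : Fin s → Set H) (f : Fin s → H → H)
    (hdiss : ∀ ℓ, ∀ u ∈ D ℓ, ∀ v ∈ D ℓ, (inner ℝ (f ℓ u - f ℓ v) (u - v) : ℝ) ≤ 0)
    (hmax : ∀ ℓ, ∀ h : ℝ, 0 < h → ∀ w : H, ∃ u ∈ D ℓ, u - h • f ℓ u = w)
    (J : Fin s → ℝ → H → H)
    (hJ : ∀ ℓ (h : ℝ), 0 < h → ∀ w : H, J ℓ h w ∈ D ℓ ∧ J ℓ h w - h • f ℓ (J ℓ h w) = w)
    (L : List (Fin s)) :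
    (∀ h : ℝ, 0 < h → ∀ u v : H, ‖lieQ J L h u - lieQ J L h v‖ ≤ ‖u - v‖) ∧
    (∀ u : H, (∀ ℓ, u ∈ D ℓ) →
      Tendsto (fun h : ℝ => h⁻¹ • (lieQ J L h u - u)) (nhdsWithin 0 (Set.Ioi 0))
        (nhds ((L.map fun ℓ => f ℓ u).sum))) := by
  induction L using List.reverseRecOn with
  | nil =>
    constructor
    · intro h hh u v; simp [lieQ]
    · intro u hu
      simp only [lieQ, List.map_nil, List.foldl_nil, id_eq, sub_self, smul_zero,
        List.sum_nil]
      exact tendsto_const_nhds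
  | append_singleton L ℓ ih =>
    obtain ⟨ih1, ih2⟩ := ih
    constructor
    · intro h hh u v
      rw [lieQ_concat]
      exact (resolvent_nonexpansive (D ℓ) (f ℓ) (hdiss ℓ) (J ℓ)
        (fun h hh w => (hJ ℓ h hh w).1) (fun h hh w => (hJ ℓ h hh w).2) hh _ _).trans
        (ih1 h hh u v)
    · intro u hu
      have hshift := resolvent_consistency_shifted (D ℓ) (f ℓ) (hdiss ℓ) (hmax ℓ) (J ℓ)
        (fun h hh w => (hJ ℓ h hh w).1) (fun h hh w => (hJ ℓ h hh w).2) (hu ℓ)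
        ((L.map fun ℓ => f ℓ u).sum) (fun h => lieQ J L h u) (ih2 u hu)
      simp only [lieQ_concat, Function.comp_apply, List.map_append, List.sum_append,
        List.map_cons, List.map_nil, List.sum_cons, List.sum_nil, add_zero]
      exact hshift

end Lists

/-- for maximal dissipative operators `f₁,…,f_s` on a Hilbert space,
the Lie-splitting operator `P_h = (I - h f_s)⁻¹ ⋯ (I - h f₁)⁻¹` is nonexpansive for
every `h > 0`, and `(1/h)(P_h - I)u → Σ_ℓ f_ℓ u` as `h → 0⁺` for `u ∈ ⋂_ℓ D(f_ℓ)`. -/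
theorem lie_splitting_nonexpansive_consistent {H : Type*}
    [NormedAddCommGroup H] [InnerProductSpace ℝ H] [CompleteSpace H]
    {s : ℕ} (hs : 0 < s)
    (D : Fin s → Set H) (f : Fin s → H → H)
    (hdiss : ∀ ℓ, ∀ u ∈ D ℓ, ∀ v ∈ D ℓ, (inner ℝ (f ℓ u - f ℓ v) (u - v) : ℝ) ≤ 0)
    (hmax : ∀ ℓ, ∀ h : ℝ, 0 < h → ∀ w : H, ∃ u ∈ D ℓ, u - h • f ℓ u = w)
    -- `J ℓ h` is the resolvent `(I - h f_ℓ)⁻¹`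
    (J : Fin s → ℝ → H → H)
    (hJ : ∀ ℓ (h : ℝ), 0 < h → ∀ w : H, J ℓ h w ∈ D ℓ ∧ J ℓ h w - h • f ℓ (J ℓ h w) = w) :
    -- the Lie-splitting operator `P h = (I - h f_s)⁻¹ ∘ ⋯ ∘ (I - h f₁)⁻¹`
    let P : ℝ → H → H := fun h =>
      (List.ofFn fun ℓ : Fin s => J ℓ h).foldl (fun acc Φ => Φ ∘ acc) id
    (∀ h : ℝ, 0 < h → ∀ u v : H, ‖P h u - P h v‖ ≤ ‖u - v‖) ∧
    (∀ u : H, (∀ ℓ, u ∈ D ℓ) →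
      Tendsto (fun h : ℝ => h⁻¹ • (P h u - u)) (nhdsWithin 0 (Set.Ioi 0))
        (nhds (∑ ℓ : Fin s, f ℓ u))) := by
  intro P
  have hP : ∀ h : ℝ, P h = lieQ J (List.finRange s) h := by
    intro h
    simp [P, lieQ, List.ofFn_eq_map]
  obtain ⟨h1, h2⟩ := lieQ_props D f hdiss hmax J hJ (List.finRange s)
  constructor
  · intro h hh u v
    rw [hP]
    exact h1 h hh u v
  · intro u hu
    have ht := h2 u hu
    have hsum : ((List.finRange s).map fun ℓ => f ℓ u).sum = ∑ ℓ : Fin s, f ℓ u := by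
      rw [← List.ofFn_eq_map, List.sum_ofFn]
    rw [hsum] at ht
    simp only [hP]
    exact ht
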